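/- For each node u, the combined pignistic probability BetP_u(I) obtained from Dempster combination of the follow, retweet and mention BBAs is nondecreasing in each singleton mass m_x(I): if m_f(I) increases (with the increase taken from m_f({I,P}), keeping m_f(P) fixed), then BetP(I) of the combined BBA does not decrease. -/

import Mathlib

/-- A BBA on the frame `Ω = {I,P}` given by the masses `(m({I}), m({P}), m({I,P}))`. -/
structure BBA2 where
  mI : ℝ
  mP : ℝ
  mIP : ℝ
  mI_nonneg : 0 ≤ mI
  mP_nonneg : 0 ≤ mP
  mIP_nonneg : 0 ≤ mIP
  sum_one : mI + mP + mIP = 1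

/-- The Dempster conflict on `Ω = {I,P}`: `K = m₁({I})m₂({P}) + m₁({P})m₂({I})`. -/
def BBA2.K (m₁ m₂ : BBA2) : ℝ := m₁.mI * m₂.mP + m₁.mP * m₂.mI

/-- The unnormalized conjunctive masses, normalized by `1 - K`
(Dempster's rule on `Ω = {I,P}`), as a raw triple. -/
noncomputable def BBA2.comb (m₁ m₂ : BBA2) : ℝ × ℝ × ℝ :=
  ((m₁.mI * m₂.mI + m₁.mI * m₂.mIP + m₁.mIP * m₂.mI) / (1 - BBA2.K m₁ m₂),
   (m₁.mP * m₂.mP + m₁.mP * m₂.mIP + m₁.mIP * m₂.mP) / (1 - BBA2.K m₁ m₂),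
   (m₁.mIP * m₂.mIP) / (1 - BBA2.K m₁ m₂))

/-- The Dempster conflict for a raw triple against a BBA. -/
def rawK (t : ℝ × ℝ × ℝ) (m : BBA2) : ℝ := t.1 * m.mP + t.2.1 * m.mI

/-- Dempster combination of a raw triple with a BBA. -/
noncomputable def rawComb (t : ℝ × ℝ × ℝ) (m : BBA2) : ℝ × ℝ × ℝ :=
  ((t.1 * m.mI + t.1 * m.mIP + t.2.2 * m.mI) / (1 - rawK t m),
   (t.2.1 * m.mP + t.2.1 * m.mIP + t.2.2 * m.mP) / (1 - rawK t m),
   (t.2.2 * m.mIP) / (1 - rawK t m))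

/-- Pignistic probability of `I` for a raw triple: `BetP(I) = m({I}) + m({I,P})/2`. -/
noncomputable def rawBetPI (t : ℝ × ℝ × ℝ) : ℝ := t.1 + t.2.2 / 2

private lemma betp_formula (A B C p q r D1 : ℝ) (hD1 : 0 < D1)
    (hK2 : A / D1 * q + B / D1 * p < 1) :
    (A/D1 * p + A/D1 * r + C/D1 * p) / (1 - (A/D1 * q + B/D1 * p)) +
      C/D1 * r / (1 - (A/D1 * q + B/D1 * p)) / 2
    = (A*(p+r) + C*(p + r/2)) / (D1 - (A*q + B*p)) := by
  have h1 : 1 - (A/D1 * q + B/D1 * p) = (D1 - (A*q+B*p))/D1 := by field_simp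
  have h2 : 0 < D1 - (A*q+B*p) := by
    rw [div_mul_eq_mul_div, div_mul_eq_mul_div, ← add_div, div_lt_one hD1] at hK2
    linarith
  rw [h1]; field_simp; ring

lemma D2_pos (A B C p q r D1 : ℝ) (hD1 : 0 < D1)
    (hK2 : A / D1 * q + B / D1 * p < 1) : 0 < D1 - (A*q + B*p) := by
  rw [div_mul_eq_mul_div, div_mul_eq_mul_div, ← add_div, div_lt_one hD1] at hK2
  linarith

set_option maxHeartbeats 1000000 in
theorem combined_betPI_monotone (mf mf' mr mm : BBA2) (ε : ℝ) (hε : 0 ≤ ε)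
    (hI : mf'.mI = mf.mI + ε) (hP : mf'.mP = mf.mP) (hIP : mf'.mIP = mf.mIP - ε)
    (hK1 : BBA2.K mf mr < 1)
    (hK2 : rawK (BBA2.comb mf mr) mm < 1)
    (hK1' : BBA2.K mf' mr < 1)
    (hK2' : rawK (BBA2.comb mf' mr) mm < 1) :
    rawBetPI (rawComb (BBA2.comb mf mr) mm) ≤
      rawBetPI (rawComb (BBA2.comb mf' mr) mm) := by
  obtain ⟨a, b, c, ha, hb, hc, hs⟩ := mf
  obtain ⟨a', b', c', ha', hb', hc', hs'⟩ := mf'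
  obtain ⟨d, e, f, hd, he, hf, hs2⟩ := mr
  obtain ⟨p, q, r, hp, hq, hr, hs3⟩ := mm
  simp only at hI hP hIP
  subst hI hP hIP
  simp only [BBA2.K, BBA2.comb, rawK, rawComb, rawBetPI] at *
  have hD1 : (0:ℝ) < 1 - (a*e + b'*d) := by linarith
  have hD1' : (0:ℝ) < 1 - ((a+ε)*e + b'*d) := by linarith
  rw [betp_formula _ (b'*e+b'*f+c*e) _ _ _ _ _ hD1 hK2,
      betp_formula _ (b'*e+b'*f+(c-ε)*e) _ _ _ _ _ hD1' hK2']
  have hD2 := D2_pos (a*d+a*f+c*d) (b'*e+b'*f+c*e) (c*f) p q r _ hD1 hK2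
  have hD2' := D2_pos ((a+ε)*d+(a+ε)*f+(c-ε)*d) (b'*e+b'*f+(c-ε)*e) ((c-ε)*f) p q r _ hD1' hK2'
  rw [div_le_div_iff₀ hD2 hD2']
  set A := a*d+a*f+c*d with hA
  set B := b'*e+b'*f+c*e with hB
  set A' := (a+ε)*d+(a+ε)*f+(c-ε)*d with hA'
  set B' := b'*e+b'*f+(c-ε)*e with hB'
  have hN : 0 ≤ A*(p+r) + (c*f)*(p + r/2) := by rw [hA]; positivity
  have hE : 0 ≤ e*(q+r) + f*q := by positivity
  have key : (A'*(p+r) + ((c-ε)*f)*(p + r/2)) * (1 - (a*e + b'*d) - (A*q + B*p))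
      - (A*(p+r) + (c*f)*(p + r/2)) * (1 - ((a+ε)*e + b'*d) - (A'*q + B'*p))
      = ε*f*(r/2)*(1 - (a*e + b'*d) - (A*q + B*p))
        + (A*(p+r) + (c*f)*(p + r/2))*ε*(e*(q+r)+f*q) := by
    rw [hA, hB, hA', hB']
    linear_combination (-((a*d+a*f+c*d)*(p+r) + c*f*(p+r/2))*ε*e) * hs3
  have h1 : 0 ≤ ε*f*r*(1 - (a*e + b'*d) - (A*q + B*p)) :=
    mul_nonneg (mul_nonneg (mul_nonneg hε hf) hr) hD2.le
  have h2 : 0 ≤ (A*(p+r) + (c*f)*(p + r/2)) * (ε*(e*(q+r)+f*q)) :=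
    mul_nonneg hN (mul_nonneg hε hE)
  clear_value A B A' B'
  linarith [key, h1, h2]
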